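/- Let Y be an integrable random variable on a probability space with Y > 0 almost surely, and let s_Y ∈ (0,∞) be such that M_Y(s) = E[e^{sY}] < ∞ for all s < s_Y and M_Y(s) → ∞ as s → s_Y from the left. Let β > E[Y]. Then there exists a unique α* ∈ (−s_Y, 0) such that α*·β + M_Y(−α*) − 1 = 0. -/

import Mathlib

open MeasureTheory ProbabilityTheory Real

/-- If `Y > 0` is integrable with mgf finite on `(-∞, s_Y)` blowing up at `s_Y`, and
`β > E[Y]`, then there is a unique `α* ∈ (−s_Y, 0)` with `α*β + M_Y(−α*) − 1 = 0`. -/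
theorem lundberg_equation_unique_negative_root
    {Ω : Type*} [MeasurableSpace Ω] (P : Measure Ω) [IsProbabilityMeasure P]
    (Y : Ω → ℝ) (hYmeas : Measurable Y) (hYint : Integrable Y P)
    (hYpos : ∀ᵐ ω ∂P, 0 < Y ω)
    (sY : ℝ) (hsY : 0 < sY)
    (hYfin : ∀ s < sY, Integrable (fun ω => Real.exp (s * Y ω)) P)
    (hYblow : Filter.Tendsto (fun s => mgf Y P s)
      (nhdsWithin sY (Set.Iio sY)) Filter.atTop)
    (β : ℝ) (hβ : ∫ ω, Y ω ∂P < β) :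
    ∃! α : ℝ, α ∈ Set.Ioo (-sY) (0 : ℝ) ∧ α * β + mgf Y P (-α) - 1 = 0 := by
  classical
  have hPne : P ≠ 0 := IsProbabilityMeasure.ne_zero P
  haveI : (ae P).NeBot := ae_neBot.2 hPne
  set f : ℝ → ℝ := fun α => α * β + mgf Y P (-α) - 1 with hfdef
  have hmeas : ∀ s : ℝ, AEStronglyMeasurable (fun ω => exp (s * Y ω)) P :=
    fun s => ((hYmeas.const_mul s).exp).aestronglyMeasurable
  have hmgf_eq : ∀ s : ℝ, mgf Y P s = ∫ ω, exp (s * Y ω) ∂P := fun s => rfl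
  -- e^x - 1 ≤ x e^x
  have hexp_aux : ∀ x : ℝ, Real.exp x - 1 ≤ x * Real.exp x := by
    intro x
    have h1 : Real.exp x * Real.exp (-x) = 1 := by
      rw [← Real.exp_add]; simp
    nlinarith [Real.add_one_le_exp (-x), Real.exp_pos x]
  -- continuity of the mgf at every point strictly below sY
  have hcont : ∀ s₀ : ℝ, s₀ < sY → ContinuousAt (fun s => mgf Y P s) s₀ := by
    intro s₀ hs₀
    set s₁ := (s₀ + sY) / 2 with hs₁def
    have h01 : s₀ < s₁ := by rw [hs₁def]; linarith
    have h1Y : s₁ < sY := by rw [hs₁def]; linarith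
    have hC : ContinuousAt (fun s => ∫ ω, exp (s * Y ω) ∂P) s₀ := by
      apply continuousAt_of_dominated (bound := fun ω => exp (s₁ * Y ω))
      · exact Filter.Eventually.of_forall fun s => hmeas s
      · filter_upwards [eventually_lt_nhds h01] with s hs
        filter_upwards [hYpos] with ω hω
        rw [Real.norm_eq_abs, Real.abs_exp]
        exact Real.exp_le_exp.2 (mul_le_mul_of_nonneg_right hs.le hω.le)
      · exact hYfin s₁ h1Y
      · exact Filter.Eventually.of_forall fun ω => by
          exact (Real.continuous_exp.comp (continuous_id.mul continuous_const)).continuousAt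
    simpa only [← hmgf_eq] using hC
  -- continuity of f
  have hfcont : ∀ α : ℝ, -sY < α → ContinuousAt f α := by
    intro α hα
    have h1 : ContinuousAt (fun a : ℝ => mgf Y P (-a)) α :=
      (hcont (-α) (by linarith)).comp continuous_neg.continuousAt
    have : ContinuousAt (fun a : ℝ => a * β + mgf Y P (-a) - 1) α :=
      ((continuousAt_id.mul continuousAt_const).add h1).sub continuousAt_const
    simpa [hfdef] using this
  -- Step D: a point with negative value
  have hD : ∃ α₀ ∈ Set.Ioo (-sY) (0 : ℝ), f α₀ < 0 := by
    set s₂ := sY / 2 with hs₂def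
    have hs₂pos : 0 < s₂ := by positivity
    have hs₂lt : s₂ < sY := by rw [hs₂def]; linarith
    set s₃ := 3 * sY / 4 with hs₃def
    have hbound_int : Integrable (fun ω => Y ω * exp (s₂ * Y ω)) P := by
      have h3 : Integrable (fun ω => (4 / sY) * exp (s₃ * Y ω)) P :=
        (hYfin s₃ (by rw [hs₃def]; linarith)).const_mul _
      refine h3.mono' (hYmeas.aestronglyMeasurable.mul (hmeas s₂)) ?_
      filter_upwards [hYpos] with ω hω
      rw [Real.norm_eq_abs, abs_of_nonneg (by positivity)]
      have h4 : Y ω ≤ (4 / sY) * exp (sY / 4 * Y ω) := by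
        have h5 := Real.add_one_le_exp (sY / 4 * Y ω)
        have h6 : (4 / sY) * (sY / 4 * Y ω + 1) ≤ (4 / sY) * exp (sY / 4 * Y ω) :=
          mul_le_mul_of_nonneg_left h5 (by positivity)
        have h7 : (4 / sY) * (sY / 4 * Y ω + 1) = Y ω + 4 / sY := by
          field_simp
        have h8 : (0:ℝ) < 4 / sY := by positivity
        linarith
      calc Y ω * exp (s₂ * Y ω) ≤ (4 / sY) * exp (sY / 4 * Y ω) * exp (s₂ * Y ω) :=
            mul_le_mul_of_nonneg_right h4 (Real.exp_pos _).le
        _ = (4 / sY) * exp (s₃ * Y ω) := by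
            rw [mul_assoc, ← Real.exp_add]; congr 2; rw [hs₂def, hs₃def]; ring
    have hlim : Filter.Tendsto (fun s => ∫ ω, (exp (s * Y ω) - 1) / s ∂P)
        (nhdsWithin 0 (Set.Ioo 0 s₂)) (nhds (∫ ω, Y ω ∂P)) := by
      refine tendsto_integral_filter_of_dominated_convergence
        (fun ω => Y ω * exp (s₂ * Y ω)) ?_ ?_ hbound_int ?_
      · exact Filter.Eventually.of_forall fun s =>
          ((((hYmeas.const_mul s).exp.sub measurable_const).div_const s).aestronglyMeasurable)
      · filter_upwards [self_mem_nhdsWithin] with s hs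
        filter_upwards [hYpos] with ω hω
        obtain ⟨hs0, hs2⟩ := hs
        have hx : 0 ≤ s * Y ω := by positivity
        have h1 : exp (s * Y ω) - 1 ≤ s * Y ω * exp (s * Y ω) := hexp_aux _
        have h2 : (1 : ℝ) ≤ exp (s * Y ω) := Real.one_le_exp hx
        have h3 : exp (s * Y ω) ≤ exp (s₂ * Y ω) :=
          Real.exp_le_exp.2 (mul_le_mul_of_nonneg_right hs2.le hω.le)
        rw [Real.norm_eq_abs, abs_div, abs_of_nonneg (by linarith), abs_of_pos hs0,
          div_le_iff₀ hs0]
        nlinarith [Real.exp_pos (s * Y ω), hω]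
      · refine Filter.Eventually.of_forall fun ω => ?_
        have hd : HasDerivAt (fun s : ℝ => exp (s * Y ω)) (Y ω) 0 := by
          have := ((hasDerivAt_id (0 : ℝ)).mul_const (Y ω)).exp
          simpa using this
        have hslope := hasDerivAt_iff_tendsto_slope.mp hd
        have hmono : nhdsWithin (0 : ℝ) (Set.Ioo 0 s₂) ≤ nhdsWithin 0 {(0 : ℝ)}ᶜ :=
          nhdsWithin_mono _ fun x hx => ne_of_gt hx.1
        refine Filter.Tendsto.congr (fun s => ?_) (hslope.mono_left hmono)
        simp [slope_def_field]
    haveI : (nhdsWithin (0 : ℝ) (Set.Ioo 0 s₂)).NeBot := left_nhdsWithin_Ioo_neBot hs₂pos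
    obtain ⟨s, hsβ, hsmem⟩ :=
      ((hlim.eventually_lt_const hβ).and self_mem_nhdsWithin).exists
    have hsint : Integrable (fun ω => exp (s * Y ω)) P := hYfin s (by linarith [hsmem.2])
    have heq : ∫ ω, (exp (s * Y ω) - 1) / s ∂P = (mgf Y P s - 1) / s := by
      rw [integral_div]
      congr 1
      rw [integral_sub hsint (integrable_const 1), integral_const]
      simp [hmgf_eq]
    rw [heq, div_lt_iff₀ hsmem.1] at hsβ
    refine ⟨-s, ⟨by linarith [hsmem.2], by linarith [hsmem.1]⟩, ?_⟩
    simp only [hfdef, neg_neg]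
    linarith
  obtain ⟨α₀, hα₀mem, hα₀neg⟩ := hD
  -- Step E: a point with positive value, to the left of α₀
  have hE : ∃ α₁ ∈ Set.Ioo (-sY) α₀, 0 < f α₁ := by
    have h1 : ∀ᶠ s in nhdsWithin sY (Set.Iio sY), 1 + sY * |β| < mgf Y P s :=
      hYblow.eventually_gt_atTop _
    have h2 : ∀ᶠ s in nhdsWithin sY (Set.Iio sY), -α₀ < s :=
      Filter.Eventually.filter_mono nhdsWithin_le_nhds
        (eventually_gt_nhds (by linarith [hα₀mem.1]))
    have h3 : ∀ᶠ s in nhdsWithin sY (Set.Iio sY), s ∈ Set.Iio sY := self_mem_nhdsWithin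
    obtain ⟨s, ⟨hs1, hs2⟩, hs3⟩ := ((h1.and h2).and h3).exists
    have hs0 : 0 < s := lt_trans (by linarith [hα₀mem.2]) hs2
    refine ⟨-s, ⟨by simpa using hs3, by linarith⟩, ?_⟩
    simp only [hfdef, neg_neg]
    have habs : -(sY * |β|) ≤ -s * β := by
      have hb1 : s * β ≤ s * |β| := mul_le_mul_of_nonneg_left (le_abs_self β) hs0.le
      have hb2 : s * |β| ≤ sY * |β| :=
        mul_le_mul_of_nonneg_right (le_of_lt hs3) (abs_nonneg β)
      linarith
    linarith
  obtain ⟨α₁, hα₁mem, hα₁pos⟩ := hE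
  -- Step F: intermediate value theorem
  have hconts : ContinuousOn f (Set.Icc α₁ α₀) := fun x hx =>
    (hfcont x (by linarith [hx.1, hα₁mem.1])).continuousWithinAt
  obtain ⟨c, hcmem, hc0⟩ :=
    intermediate_value_Icc' (le_of_lt hα₁mem.2) hconts ⟨hα₀neg.le, hα₁pos.le⟩
  have hcIoo : c ∈ Set.Ioo (-sY) (0 : ℝ) :=
    ⟨by linarith [hcmem.1, hα₁mem.1], by linarith [hcmem.2, hα₀mem.2]⟩
  -- strict convexity of f on Ioc (-sY) 0
  have hstrict : StrictConvexOn ℝ (Set.Ioc (-sY) (0 : ℝ)) f := by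
    refine ⟨convex_Ioc _ _, fun x hx y hy hxy a b ha hb hab => ?_⟩
    simp only [smul_eq_mul]
    have hxint : Integrable (fun ω => exp (-x * Y ω)) P := hYfin (-x) (by linarith [hx.1])
    have hyint : Integrable (fun ω => exp (-y * Y ω)) P := hYfin (-y) (by linarith [hy.1])
    have hzIoc : a * x + b * y ∈ Set.Ioc (-sY) (0 : ℝ) := by
      have := (convex_Ioc (-sY) (0 : ℝ)) hx hy ha.le hb.le hab
      simpa using this
    have hzint : Integrable (fun ω => exp (-(a * x + b * y) * Y ω)) P :=
      hYfin (-(a * x + b * y)) (by linarith [hzIoc.1])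
    have hae : ∀ᵐ ω ∂P,
        exp (-(a * x + b * y) * Y ω) < a * exp (-x * Y ω) + b * exp (-y * Y ω) := by
      filter_upwards [hYpos] with ω hω
      have hne : -x * Y ω ≠ -y * Y ω := by
        intro h
        exact hxy (by
          have := mul_right_cancel₀ (ne_of_gt hω) h
          linarith)
      have hsc := strictConvexOn_exp.2 (Set.mem_univ (-x * Y ω)) (Set.mem_univ (-y * Y ω))
        hne ha hb hab
      simp only [smul_eq_mul] at hsc
      have harg : a * (-x * Y ω) + b * (-y * Y ω) = -(a * x + b * y) * Y ω := by ring
      rwa [harg] at hsc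
    set g : Ω → ℝ :=
      fun ω => a * exp (-x * Y ω) + b * exp (-y * Y ω) - exp (-(a * x + b * y) * Y ω)
      with hgdef
    have hgint : Integrable g P :=
      ((hxint.const_mul a).add (hyint.const_mul b)).sub hzint
    have hgpos : 0 < ∫ ω, g ω ∂P := by
      rw [integral_pos_iff_support_of_nonneg_ae
        (by filter_upwards [hae] with ω h; simp only [hgdef, Pi.zero_apply]; linarith) hgint]
      by_contra h
      push_neg at h
      have hz : P (Function.support g) = 0 := le_antisymm h zero_le
      have hzero : ∀ᵐ ω ∂P, g ω = 0 := by
        rw [ae_iff]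
        simpa [Function.support] using hz
      obtain ⟨ω, h1, h2⟩ := (hzero.and hae).exists
      simp only [hgdef] at h1
      linarith
    have hsplit : ∫ ω, g ω ∂P =
        a * ∫ ω, exp (-x * Y ω) ∂P + b * ∫ ω, exp (-y * Y ω) ∂P
          - ∫ ω, exp (-(a * x + b * y) * Y ω) ∂P := by
      have hABint : Integrable (fun ω => a * exp (-x * Y ω) + b * exp (-y * Y ω)) P :=
        (hxint.const_mul a).add (hyint.const_mul b)
      simp only [hgdef]
      rw [integral_sub hABint hzint,
        integral_add (hxint.const_mul a) (hyint.const_mul b),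
        integral_const_mul, integral_const_mul]
    rw [hsplit] at hgpos
    simp only [hfdef]
    rw [hmgf_eq, hmgf_eq, hmgf_eq]
    nlinarith [hgpos]
  -- uniqueness via strict convexity and f 0 = 0
  have hf0 : f 0 = 0 := by
    simp [hfdef, mgf_zero]
  have key : ∀ u v : ℝ, u ∈ Set.Ioo (-sY) (0 : ℝ) → v ∈ Set.Ioo (-sY) (0 : ℝ) → u < v →
      f u = 0 → f v = 0 → False := by
    intro u v hu hv huv hfu hfv
    have hu0 : u < 0 := hu.2
    have hune : u ≠ 0 := ne_of_lt hu0
    set t := v / u with htdef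
    have htu : t * u = v := div_mul_cancel₀ v hune
    have ht0 : 0 < t := div_pos_of_neg_of_neg hv.2 hu0
    have ht1 : t < 1 := by nlinarith
    have hb : 0 < 1 - t := by linarith
    have := hstrict.2 (x := u) (y := 0) ⟨hu.1, hu0.le⟩ ⟨by linarith, le_refl 0⟩ hune
      ht0 hb (by ring)
    simp only [smul_eq_mul, mul_zero, add_zero, htu, hfu, hf0] at this
    rw [hfv] at this
    linarith
  refine ⟨c, ⟨hcIoo, by simpa [hfdef] using hc0⟩, ?_⟩
  rintro d ⟨hdIoo, hd0⟩
  have hd0' : f d = 0 := by simpa [hfdef] using hd0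
  rcases lt_trichotomy d c with h | h | h
  · exact absurd (key d c hdIoo hcIoo h hd0' hc0) not_false
  · exact h
  · exact absurd (key c d hcIoo hdIoo h hc0 hd0') not_false
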